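/- Let M₁, M₂ ≥ 1 be integers, let z_1, …, z_{M₁} ∈ ℂ be pairwise distinct and let w_1, …, w_{M₂} ∈ ℂ be pairwise distinct. Then Σ_{i=1}^{M₁} Σ_{k=1}^{M₂} Σ_{m=1}^{M₁−1} Σ_{n=1}^{M₂−1} (−1)^n Σ_{A} Σ_{B} z_i w_k (z_i − w_k)^{m+n−2} / (∏_{a∈A}(z_a − z_i) · ∏_{b∈B}(w_b − w_k)) = −Σ_{m=1}^{min(M₁,M₂)} (M₁ − m)(M₂ − m), where the inner sums range over all subsets A ⊆ {1,…,M₁}\{i} with |A| = m and all subsets B ⊆ {1,…,M₂}\{k} with |B| = n. -/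

import Mathlib

open Finset Polynomial

lemma basis_coeff (s : Finset ℂ) (x : ℂ) (hx : x ∈ s) :
    (Lagrange.basis s id x).coeff (s.card - 1) = ∏ y ∈ s.erase x, (x - y)⁻¹ := by
  have hinj : Set.InjOn (id : ℂ → ℂ) s := Function.injective_id.injOn
  have hnd := Lagrange.natDegree_basis hinj hx
  rw [← hnd, ← leadingCoeff]
  unfold Lagrange.basis
  rw [leadingCoeff_prod]
  refine Finset.prod_congr rfl fun y hy => ?_
  have hxy : x ≠ y := by
    intro h; subst h; exact (Finset.mem_erase.mp hy).1 rfl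
  unfold Lagrange.basisDivisor
  rw [leadingCoeff_mul, leadingCoeff_C, leadingCoeff_X_sub_C, mul_one]; rfl

lemma lag_sum (s : Finset ℂ) (p : ℕ) (hp : p < s.card) :
    ∑ x ∈ s, x^p / ∏ y ∈ s.erase x, (x - y) = if p + 1 = s.card then 1 else 0 := by
  have hinj : Set.InjOn (id : ℂ → ℂ) s := Function.injective_id.injOn
  have hdeg : (X ^ p : ℂ[X]).degree < s.card := by
    simpa using (WithBot.coe_lt_coe.mpr hp : (p : WithBot ℕ) < s.card)
  have h := (Lagrange.eq_interpolate (f := (X:ℂ[X])^p) hinj hdeg).symm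
  have h2 := congrArg (fun q : ℂ[X] => q.coeff (s.card - 1)) h
  simp only [Lagrange.interpolate_apply, finset_sum_coeff, coeff_C_mul, eval_pow, eval_X,
    coeff_X_pow, id] at h2
  rw [Finset.sum_congr rfl (fun x hx => by rw [basis_coeff s x hx])] at h2
  rw [Finset.sum_congr rfl (fun x hx => ?_), h2]
  · have hcard : 1 ≤ s.card := Nat.one_le_of_lt (Nat.lt_of_le_of_lt (Nat.zero_le _) hp)
    congr 1
    simp only [eq_iff_iff]; omega
  · rw [div_eq_mul_inv, ← Finset.prod_inv_distrib]

lemma pair_reindex {N m : ℕ} (f : Fin N → Finset (Fin N) → ℂ) :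
    ∑ i : Fin N, ∑ A ∈ (univ.erase i).powersetCard m, f i A
      = ∑ C ∈ (univ : Finset (Fin N)).powersetCard (m+1), ∑ i ∈ C, f i (C.erase i) := by
  rw [Finset.sum_sigma' univ (fun i => (univ.erase i).powersetCard m) (fun i A => f i A),
      Finset.sum_sigma' ((univ : Finset (Fin N)).powersetCard (m+1)) (fun C => C)
        (fun C i => f i (C.erase i))]
  refine Finset.sum_nbij' (fun x => ⟨insert x.1 x.2, x.1⟩) (fun y => ⟨y.2, y.1.erase y.2⟩)
    ?_ ?_ ?_ ?_ ?_
  · rintro ⟨i, A⟩ hx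
    simp only [Finset.mem_sigma, Finset.mem_powersetCard, Finset.mem_univ] at hx ⊢
    obtain ⟨-, hA, hcard⟩ := hx
    have hiA : i ∉ A := fun h => (Finset.mem_erase.mp (hA h)).1 rfl
    exact ⟨⟨Finset.subset_univ _, by rw [Finset.card_insert_of_notMem hiA, hcard]⟩,
      Finset.mem_insert_self _ _⟩
  · rintro ⟨C, i⟩ hy
    simp only [Finset.mem_sigma, Finset.mem_powersetCard, Finset.mem_univ] at hy ⊢
    obtain ⟨⟨-, hcard⟩, hi⟩ := hy
    refine ⟨trivial, fun a ha => Finset.mem_erase.mpr ⟨(Finset.mem_erase.mp ha).1,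
      Finset.mem_univ a⟩, by rw [Finset.card_erase_of_mem hi, hcard]; omega⟩
  · rintro ⟨i, A⟩ hx
    simp only [Finset.mem_sigma, Finset.mem_powersetCard, Finset.mem_univ] at hx
    have hiA : i ∉ A := fun h => (Finset.mem_erase.mp (hx.2.1 h)).1 rfl
    simp [Finset.erase_insert hiA]
  · rintro ⟨C, i⟩ hy
    simp only [Finset.mem_sigma, Finset.mem_powersetCard, Finset.mem_univ] at hy
    simp [Finset.insert_erase hy.2]
  · rintro ⟨i, A⟩ hx
    simp only [Finset.mem_sigma, Finset.mem_powersetCard, Finset.mem_univ] at hx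
    have hiA : i ∉ A := fun h => (Finset.mem_erase.mp (hx.2.1 h)).1 rfl
    simp [Finset.erase_insert hiA]

lemma U_eval {N : ℕ} (z : Fin N → ℂ) (hz : Function.Injective z) (m p : ℕ) (hp : p ≤ m) :
    ∑ i : Fin N, ∑ A ∈ (univ.erase i).powersetCard m, z i ^ p / ∏ a ∈ A, (z a - z i)
    = if p = m then (-1 : ℂ)^m * (N.choose (m+1)) else 0 := by
  rw [pair_reindex (fun i A => z i ^ p / ∏ a ∈ A, (z a - z i))]
  have key : ∀ C ∈ (univ : Finset (Fin N)).powersetCard (m+1),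
      ∑ i ∈ C, z i ^ p / ∏ a ∈ C.erase i, (z a - z i)
        = (-1:ℂ)^m * (if p = m then 1 else 0) := by
    intro C hC
    have hCcard : C.card = m + 1 := (Finset.mem_powersetCard.mp hC).2
    have step1 : ∀ i ∈ C, z i ^ p / ∏ a ∈ C.erase i, (z a - z i)
        = (-1:ℂ)^m * (z i ^ p / ∏ a ∈ C.erase i, (z i - z a)) := by
      intro i hi
      have hme : (C.erase i).card = m := by
        rw [Finset.card_erase_of_mem hi, hCcard]; omega
      have h1 : ∏ a ∈ C.erase i, (z a - z i) = (-1:ℂ)^m * ∏ a ∈ C.erase i, (z i - z a) := by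
        rw [← hme, ← Finset.prod_const (-1:ℂ), ← Finset.prod_mul_distrib]
        exact Finset.prod_congr rfl fun a _ => by ring
      rw [h1]
      have hmne : ((-1:ℂ)^m) ≠ 0 := by
        simp [pow_ne_zero]
      field_simp
      ring_nf
      rw [pow_mul', neg_one_sq, one_pow, mul_one]
    rw [Finset.sum_congr rfl step1, ← Finset.mul_sum]
    congr 1
    -- now convert to image sum
    have himg : ∑ i ∈ C, z i ^ p / ∏ a ∈ C.erase i, (z i - z a)
        = ∑ x ∈ C.image z, x ^ p / ∏ y ∈ (C.image z).erase x, (x - y) := by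
      rw [Finset.sum_image (fun a _ b _ h => hz h)]
      refine Finset.sum_congr rfl fun i hi => ?_
      congr 1
      rw [← Finset.image_erase hz, Finset.prod_image (fun a _ b _ h => hz h)]
    rw [himg, lag_sum]
    · have : (C.image z).card = m + 1 := by
        rw [Finset.card_image_of_injective _ hz, hCcard]
      rw [this]
      congr 1
      simp only [eq_iff_iff]; omega
    · rw [Finset.card_image_of_injective _ hz, hCcard]; omega
  rw [Finset.sum_congr rfl key, Finset.sum_const, Finset.card_powersetCard, Finset.card_univ,
      Fintype.card_fin]
  rcases eq_or_ne p m with h | h <;> simp [h, mul_comm]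

def Sc (i j P Q : ℕ) : ℤ :=
  ∑ a ∈ range (P+1), ∑ b ∈ range (Q+1),
    (-1:ℤ)^(a+b) * ((a+b).choose a) * (P.choose (a+i)) * (Q.choose (b+j))

lemma Sc_ext (i j P Q N M : ℕ) (hN : P+1 ≤ N) (hM : Q+1 ≤ M) :
    ∑ a ∈ range N, ∑ b ∈ range M,
      (-1:ℤ)^(a+b) * ((a+b).choose a) * (P.choose (a+i)) * (Q.choose (b+j))
    = Sc i j P Q := by
  unfold Sc
  rw [← Finset.sum_subset (Finset.range_subset_range.mpr hN)]
  · refine Finset.sum_congr rfl fun a _ => ?_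
    rw [← Finset.sum_subset (Finset.range_subset_range.mpr hM)]
    intro b _ hb
    rw [Finset.mem_range, not_lt] at hb
    rw [Nat.choose_eq_zero_of_lt (show Q < b + j by omega)]
    ring
  · intro a _ ha
    rw [Finset.mem_range, not_lt] at ha
    refine Finset.sum_eq_zero fun b _ => ?_
    rw [Nat.choose_eq_zero_of_lt (show P < a + i by omega)]
    ring

lemma Jlem (P t : ℕ) :
    ∑ a ∈ range (P+1), (-1:ℤ)^a * (P.choose a) * (a.choose t)
    = if t = P then (-1:ℤ)^P else 0 := by
  rcases le_or_gt t P with ht | ht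
  · have h1 : ∑ a ∈ range (P+1), (-1:ℤ)^a * (P.choose a) * (a.choose t)
        = ∑ a ∈ Finset.Ico t (P+1), (-1:ℤ)^a * (P.choose a) * (a.choose t) := by
      refine (Finset.sum_subset ?_ ?_).symm
      · intro x hx
        rw [Finset.mem_Ico] at hx
        rw [Finset.mem_range]
        omega
      · intro a haR ha
        rw [Finset.mem_range] at haR
        rw [Finset.mem_Ico] at ha
        push_neg at ha
        rw [Nat.choose_eq_zero_of_lt (show a < t by omega)]
        ring
    rw [h1, Finset.sum_Ico_eq_sum_range]
    have h2 : ∀ s ∈ range (P + 1 - t), (-1:ℤ)^(t+s) * (P.choose (t+s)) * ((t+s).choose t)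
        = ((-1:ℤ)^t * (P.choose t)) * ((-1:ℤ)^s * ((P-t).choose s)) := by
      intro s hs
      rw [Finset.mem_range] at hs
      have hle : t + s ≤ P := by omega
      have hnat := Nat.choose_mul (n := P) (k := t+s) (s := t) (Nat.le_add_right t s)
      simp only [Nat.add_sub_cancel_left] at hnat
      have h4 : ((P.choose (t+s)) : ℤ) * ((t+s).choose t)
          = (P.choose t : ℤ) * ((P-t).choose s) := by exact_mod_cast congrArg Nat.cast hnat
      rw [pow_add]
      linear_combination ((-1:ℤ)^t * (-1:ℤ)^s) * h4
    rw [Finset.sum_congr rfl h2, ← Finset.mul_sum]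
    have h3 : P + 1 - t = (P - t) + 1 := by omega
    rw [h3, Int.alternating_sum_range_choose]
    rcases eq_or_ne t P with h | h
    · subst h
      simp [Nat.sub_self]
    · have hne : P - t ≠ 0 := by omega
      simp [hne, h]
  · rw [if_neg (by omega)]
    refine Finset.sum_eq_zero fun a ha => ?_
    rw [Finset.mem_range] at ha
    rw [Nat.choose_eq_zero_of_lt (show a < t by omega)]
    ring

lemma vander (a b : ℕ) : (a+b).choose a = ∑ t ∈ range (a+1), a.choose t * b.choose t := by
  rw [Nat.add_choose_eq a b a,
      Finset.Nat.sum_antidiagonal_eq_sum_range_succ (fun x y => a.choose x * b.choose y) a,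
      ← Finset.sum_range_reflect]
  refine Finset.sum_congr rfl fun t ht => ?_
  rw [Finset.mem_range] at ht
  have e1 : a + 1 - 1 - t = a - t := by omega
  have e2 : a - (a - t) = t := by omega
  simp only [e1, e2]
  rw [Nat.choose_symm (by omega)]

lemma Klem (P b : ℕ) :
    ∑ a ∈ range (P+1), (-1:ℤ)^a * (P.choose a) * ((a+b).choose a)
    = (-1:ℤ)^P * (b.choose P) := by
  have expand : ∀ a ∈ range (P+1), (-1:ℤ)^a * (P.choose a) * ((a+b).choose a)
      = ∑ t ∈ range (P+1), ((b.choose t : ℤ)) * ((-1:ℤ)^a * (P.choose a) * (a.choose t)) := by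
    intro a ha
    rw [Finset.mem_range] at ha
    have v : ((a+b).choose a : ℤ) = ∑ t ∈ range (a+1), ((a.choose t : ℤ)) * (b.choose t) := by
      rw [vander a b]; push_cast; rfl
    have v2 : ∑ t ∈ range (a+1), ((a.choose t : ℤ)) * (b.choose t)
        = ∑ t ∈ range (P+1), ((a.choose t : ℤ)) * (b.choose t) := by
      refine Finset.sum_subset (Finset.range_subset_range.mpr (by omega)) ?_
      intro t _ ht
      rw [Finset.mem_range, not_lt] at ht
      rw [Nat.choose_eq_zero_of_lt (show a < t by omega)]
      ring
    rw [v, v2, Finset.mul_sum]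
    refine Finset.sum_congr rfl fun t _ => by ring
  rw [Finset.sum_congr rfl expand, Finset.sum_comm]
  have h5 : ∀ t ∈ range (P+1), ∑ a ∈ range (P+1),
      ((b.choose t : ℤ)) * ((-1:ℤ)^a * (P.choose a) * (a.choose t))
      = (b.choose t : ℤ) * (if t = P then (-1:ℤ)^P else 0) := by
    intro t _
    rw [← Finset.mul_sum, Jlem]
  rw [Finset.sum_congr rfl h5]
  simp [mul_comm]

lemma S00 (P Q : ℕ) : Sc 0 0 P Q = if P = Q then 1 else 0 := by
  unfold Sc
  rw [Finset.sum_comm]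
  have h1 : ∀ b ∈ range (Q+1), ∑ a ∈ range (P+1),
      (-1:ℤ)^(a+b) * ((a+b).choose a) * (P.choose (a+0)) * (Q.choose (b+0))
      = (-1:ℤ)^P * ((-1:ℤ)^b * (Q.choose b) * (b.choose P)) := by
    intro b _
    have := Klem P b
    calc ∑ a ∈ range (P+1), (-1:ℤ)^(a+b) * ((a+b).choose a) * (P.choose (a+0)) * (Q.choose (b+0))
        = ((-1:ℤ)^b * (Q.choose b)) *
            ∑ a ∈ range (P+1), (-1:ℤ)^a * (P.choose a) * ((a+b).choose a) := by
          rw [Finset.mul_sum]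
          refine Finset.sum_congr rfl fun a _ => ?_
          rw [pow_add]
          ring
      _ = (-1:ℤ)^P * ((-1:ℤ)^b * (Q.choose b) * (b.choose P)) := by rw [this]; ring
  rw [Finset.sum_congr rfl h1, ← Finset.mul_sum, Jlem Q P]
  rcases eq_or_ne P Q with h | h
  · subst h
    rw [if_pos rfl, if_pos rfl, ← pow_add]
    exact Even.neg_one_pow ⟨P, by ring⟩
  · rw [if_neg h, mul_zero, if_neg h]

lemma Sc_rec_j (i j P Q : ℕ) : Sc i (j+1) P (Q+1) = Sc i (j+1) P Q + Sc i j P Q := by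
  have h : ∀ a ∈ range (P+1), ∀ b ∈ range (Q+2),
      (-1:ℤ)^(a+b) * ((a+b).choose a) * (P.choose (a+i)) * ((Q+1).choose (b+(j+1)))
      = (-1:ℤ)^(a+b) * ((a+b).choose a) * (P.choose (a+i)) * (Q.choose (b+(j+1)))
        + (-1:ℤ)^(a+b) * ((a+b).choose a) * (P.choose (a+i)) * (Q.choose (b+j)) := by
    intro a _ b _
    have : (Q+1).choose (b+(j+1)) = Q.choose (b+j) + Q.choose (b+(j+1)) := by
      have := Nat.choose_succ_succ' Q (b+j)
      rw [show b + (j+1) = (b+j)+1 by ring] at *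
      exact this
    rw [this]
    push_cast
    ring
  unfold Sc
  rw [Finset.sum_congr rfl (fun a ha => Finset.sum_congr rfl (h a ha)),
      Finset.sum_congr rfl (fun a _ => Finset.sum_add_distrib), Finset.sum_add_distrib]
  rw [Sc_ext i (j+1) P Q (P+1) (Q+2) le_rfl (by omega),
      Sc_ext i j P Q (P+1) (Q+2) le_rfl (by omega)]
  rfl

lemma Sc_rec_i (i j P Q : ℕ) : Sc (i+1) j (P+1) Q = Sc (i+1) j P Q + Sc i j P Q := by
  have h : ∀ a ∈ range (P+2), ∀ b ∈ range (Q+1),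
      (-1:ℤ)^(a+b) * ((a+b).choose a) * ((P+1).choose (a+(i+1))) * (Q.choose (b+j))
      = (-1:ℤ)^(a+b) * ((a+b).choose a) * (P.choose (a+(i+1))) * (Q.choose (b+j))
        + (-1:ℤ)^(a+b) * ((a+b).choose a) * (P.choose (a+i)) * (Q.choose (b+j)) := by
    intro a _ b _
    have : (P+1).choose (a+(i+1)) = P.choose (a+i) + P.choose (a+(i+1)) := by
      have := Nat.choose_succ_succ' P (a+i)
      rw [show a + (i+1) = (a+i)+1 by ring] at *
      exact this
    rw [this]
    push_cast
    ring
  unfold Sc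
  rw [Finset.sum_congr rfl (fun a ha => Finset.sum_congr rfl (h a ha)),
      Finset.sum_congr rfl (fun a _ => Finset.sum_add_distrib), Finset.sum_add_distrib]
  rw [Sc_ext (i+1) j P Q (P+2) (Q+1) (by omega) le_rfl,
      Sc_ext i j P Q (P+2) (Q+1) (by omega) le_rfl]
  rfl

lemma Sc_Q0 (i j P : ℕ) (hj : 1 ≤ j) : Sc i j P 0 = 0 := by
  unfold Sc
  refine Finset.sum_eq_zero fun a _ => ?_
  refine Finset.sum_eq_zero fun b hb => ?_
  rw [Finset.mem_range] at hb
  rw [Nat.choose_eq_zero_of_lt (show 0 < b + j by omega)]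
  ring

lemma Sc_P0 (i j Q : ℕ) (hi : 1 ≤ i) : Sc i j 0 Q = 0 := by
  unfold Sc
  refine Finset.sum_eq_zero fun a ha => ?_
  refine Finset.sum_eq_zero fun b _ => ?_
  rw [Nat.choose_eq_zero_of_lt (show 0 < a + i by omega)]
  ring

lemma S01 (P Q : ℕ) : Sc 0 1 P Q = if P < Q then 1 else 0 := by
  induction Q with
  | zero => rw [Sc_Q0 0 1 P le_rfl, if_neg (by omega)]
  | succ Q ih =>
    rw [Sc_rec_j 0 0 P Q, ih, S00]
    rcases lt_trichotomy P Q with h | h | h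
    · rw [if_pos h, if_neg (by omega), if_pos (by omega)]; ring
    · rw [if_neg (by omega), if_pos h, if_pos (by omega)]; ring
    · rw [if_neg (by omega), if_neg (by omega), if_neg (by omega)]; ring

lemma S02 (P Q : ℕ) : Sc 0 2 P Q = if P < Q then (Q:ℤ) - P - 1 else 0 := by
  induction Q with
  | zero => rw [Sc_Q0 0 2 P (by omega), if_neg (by omega)]
  | succ Q ih =>
    rw [Sc_rec_j 0 1 P Q, ih, S01]
    rcases lt_trichotomy P Q with h | h | h
    · rw [if_pos h, if_pos h, if_pos (by omega)]
      push_cast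
      ring
    · rw [if_neg (by omega), if_neg (by omega), if_pos (by omega)]
      subst h
      push_cast
      ring
    · rw [if_neg (by omega), if_neg (by omega), if_neg (by omega)]
      ring

noncomputable def Af (P Q : ℕ) : ℤ := ∑ m ∈ Finset.Icc 1 (min P Q), ((Q:ℤ) - m)
noncomputable def Rf (P Q : ℕ) : ℤ :=
  ∑ m ∈ Finset.Icc 1 (min P Q), ((P:ℤ) - m) * ((Q:ℤ) - m)

lemma S12 (P Q : ℕ) : Sc 1 2 P Q = Af P Q := by
  induction P with
  | zero =>
    rw [Sc_P0 1 2 Q le_rfl]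
    unfold Af
    simp
  | succ P ih =>
    rw [Sc_rec_i 0 2 P Q, ih, S02]
    unfold Af
    rcases lt_or_ge P Q with h | h
    · rw [if_pos h, show min P Q = P from min_eq_left (by omega),
          show min (P+1) Q = P + 1 from min_eq_left (by omega),
          Finset.sum_Icc_succ_top (by omega : 1 ≤ P + 1)]
      push_cast
      ring
    · rw [if_neg (by omega), show min P Q = Q from min_eq_right (by omega),
          show min (P+1) Q = Q from min_eq_right (by omega), add_zero]

lemma S22 (P Q : ℕ) : Sc 2 2 P Q = Rf P Q := by
  induction P with
  | zero =>
    rw [Sc_P0 2 2 Q (by omega)]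
    unfold Rf
    simp
  | succ P ih =>
    rw [Sc_rec_i 1 2 P Q, ih, S12]
    unfold Rf Af
    rcases lt_or_ge P Q with h | h
    · rw [show min P Q = P from min_eq_left (by omega),
          show min (P+1) Q = P + 1 from min_eq_left (by omega),
          Finset.sum_Icc_succ_top (by omega : 1 ≤ P + 1), ← Finset.sum_add_distrib]
      have : ∀ m ∈ Finset.Icc 1 P, ((P:ℤ) - m) * ((Q:ℤ) - m) + ((Q:ℤ) - m)
          = (((P:ℕ)+1 : ℤ) - m) * ((Q:ℤ) - m) := fun m _ => by push_cast; ring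
      rw [Finset.sum_congr rfl this]
      push_cast
      ring
    · rw [show min P Q = Q from min_eq_right (by omega),
          show min (P+1) Q = Q from min_eq_right (by omega), ← Finset.sum_add_distrib]
      refine Finset.sum_congr rfl fun m _ => ?_
      push_cast
      ring

lemma inner_eval {M₁ M₂ : ℕ} (z : Fin M₁ → ℂ) (hz : Function.Injective z)
    (w : Fin M₂ → ℂ) (hw : Function.Injective w) (m n : ℕ) (hm : 1 ≤ m) (hn : 1 ≤ n) :
    ∑ i : Fin M₁, ∑ k : Fin M₂,
      ∑ A ∈ (univ.erase i).powersetCard m, ∑ B ∈ (univ.erase k).powersetCard n,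
        z i * w k * (z i - w k) ^ (m + n - 2) /
          ((∏ a ∈ A, (z a - z i)) * ∏ b ∈ B, (w b - w k))
    = ((-1:ℂ)^(m - 1 + (m + n - 2)) * (((m + n - 2).choose (m-1) : ℕ) : ℂ))
        * ((-1:ℂ)^m * ((M₁.choose (m+1) : ℕ) : ℂ))
        * ((-1:ℂ)^n * ((M₂.choose (n+1) : ℕ) : ℂ)) := by
  set q := m + n - 2 with hq
  have point : ∀ (i : Fin M₁) (k : Fin M₂) (A : Finset (Fin M₁)) (B : Finset (Fin M₂)),
      z i * w k * (z i - w k) ^ q / ((∏ a ∈ A, (z a - z i)) * ∏ b ∈ B, (w b - w k))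
      = ∑ j ∈ range (q+1), ((-1:ℂ)^(j+q) * ((q.choose j : ℕ) : ℂ)) *
          (z i ^ (j+1) / ∏ a ∈ A, (z a - z i)) * (w k ^ (q-j+1) / ∏ b ∈ B, (w b - w k)) := by
    intro i k A B
    rw [sub_pow]
    simp only [div_eq_mul_inv, mul_inv, Finset.sum_mul, Finset.mul_sum]
    refine Finset.sum_congr rfl fun j hj => ?_
    rw [pow_succ, pow_succ]
    ring
  have step1 : ∑ i : Fin M₁, ∑ k : Fin M₂,
      ∑ A ∈ (univ.erase i).powersetCard m, ∑ B ∈ (univ.erase k).powersetCard n,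
        z i * w k * (z i - w k) ^ q / ((∏ a ∈ A, (z a - z i)) * ∏ b ∈ B, (w b - w k))
      = ∑ j ∈ range (q+1), ((-1:ℂ)^(j+q) * ((q.choose j : ℕ) : ℂ)) *
          (∑ i : Fin M₁, ∑ A ∈ (univ.erase i).powersetCard m,
            z i ^ (j+1) / ∏ a ∈ A, (z a - z i))
          * (∑ k : Fin M₂, ∑ B ∈ (univ.erase k).powersetCard n,
            w k ^ (q-j+1) / ∏ b ∈ B, (w b - w k)) := by
    simp only [point]
    conv_lhs => enter [2, i, 2, k, 2, A]; rw [Finset.sum_comm]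
    conv_lhs => enter [2, i, 2, k]; rw [Finset.sum_comm]
    conv_lhs => enter [2, i]; rw [Finset.sum_comm]
    conv_lhs => rw [Finset.sum_comm]
    refine Finset.sum_congr rfl fun j _ => ?_
    simp only [Finset.mul_sum, Finset.sum_mul]
    conv_lhs => rw [Finset.sum_comm]
    conv_lhs => enter [2, k, 2, i]; rw [Finset.sum_comm]
    conv_lhs => enter [2, k]; rw [Finset.sum_comm]
  rw [step1]
  have hmem : m - 1 ∈ range (q+1) := by
    rw [Finset.mem_range]
    omega
  rw [Finset.sum_eq_single_of_mem (m-1) hmem]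
  · simp only [show m - 1 + 1 = m from by omega, show q - (m-1) + 1 = n from by omega]
    rw [U_eval z hz m m le_rfl, if_pos rfl, U_eval w hw n n le_rfl, if_pos rfl]
  · intro j hj hne
    rw [Finset.mem_range] at hj
    rcases lt_or_gt_of_ne hne with h | h
    · rw [U_eval z hz m (j+1) (by omega), if_neg (by omega)]
      ring
    · rw [U_eval w hw n (q-j+1) (by omega), if_neg (by omega)]
      ring





theorem stmt1 (M₁ M₂ : ℕ) (hM₁ : 1 ≤ M₁) (hM₂ : 1 ≤ M₂)
    (z : Fin M₁ → ℂ) (hz : Function.Injective z)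
    (w : Fin M₂ → ℂ) (hw : Function.Injective w) :
    ∑ i : Fin M₁, ∑ k : Fin M₂, ∑ m ∈ Finset.Icc 1 (M₁ - 1), ∑ n ∈ Finset.Icc 1 (M₂ - 1),
      (-1 : ℂ) ^ n *
        ∑ A ∈ (univ.erase i).powersetCard m,
          ∑ B ∈ (univ.erase k).powersetCard n,
            z i * w k * (z i - w k) ^ (m + n - 2) /
              ((∏ a ∈ A, (z a - z i)) * ∏ b ∈ B, (w b - w k))
    = -∑ m ∈ Finset.Icc 1 (min M₁ M₂), ((M₁ : ℂ) - m) * ((M₂ : ℂ) - m) := by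
  have step0 : ∑ i : Fin M₁, ∑ k : Fin M₂, ∑ m ∈ Finset.Icc 1 (M₁ - 1),
        ∑ n ∈ Finset.Icc 1 (M₂ - 1),
      (-1 : ℂ) ^ n *
        ∑ A ∈ (univ.erase i).powersetCard m,
          ∑ B ∈ (univ.erase k).powersetCard n,
            z i * w k * (z i - w k) ^ (m + n - 2) /
              ((∏ a ∈ A, (z a - z i)) * ∏ b ∈ B, (w b - w k))
      = ∑ m ∈ Finset.Icc 1 (M₁ - 1), ∑ n ∈ Finset.Icc 1 (M₂ - 1),
          (-1 : ℂ) ^ n * ∑ i : Fin M₁, ∑ k : Fin M₂,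
            ∑ A ∈ (univ.erase i).powersetCard m,
              ∑ B ∈ (univ.erase k).powersetCard n,
                z i * w k * (z i - w k) ^ (m + n - 2) /
                  ((∏ a ∈ A, (z a - z i)) * ∏ b ∈ B, (w b - w k)) := by
    conv_lhs => enter [2, i]; rw [Finset.sum_comm]
    conv_lhs => rw [Finset.sum_comm]
    conv_lhs => enter [2, m, 2, i]; rw [Finset.sum_comm]
    conv_lhs => enter [2, m]; rw [Finset.sum_comm]
    refine Finset.sum_congr rfl fun m _ => Finset.sum_congr rfl fun n _ => ?_
    rw [Finset.mul_sum]
    refine Finset.sum_congr rfl fun i _ => ?_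
    rw [Finset.mul_sum]
  rw [step0]
  have step2 : ∀ m ∈ Finset.Icc 1 (M₁ - 1), ∀ n ∈ Finset.Icc 1 (M₂ - 1),
      (-1 : ℂ) ^ n * ∑ i : Fin M₁, ∑ k : Fin M₂,
            ∑ A ∈ (univ.erase i).powersetCard m,
              ∑ B ∈ (univ.erase k).powersetCard n,
                z i * w k * (z i - w k) ^ (m + n - 2) /
                  ((∏ a ∈ A, (z a - z i)) * ∏ b ∈ B, (w b - w k))
      = (-1 : ℂ) ^ n * (((-1:ℂ)^(m - 1 + (m + n - 2)) * (((m + n - 2).choose (m-1) : ℕ) : ℂ))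
          * ((-1:ℂ)^m * ((M₁.choose (m+1) : ℕ) : ℂ))
          * ((-1:ℂ)^n * ((M₂.choose (n+1) : ℕ) : ℂ))) := by
    intro m hm n hn
    rw [inner_eval z hz w hw m n (Finset.mem_Icc.mp hm).1 (Finset.mem_Icc.mp hn).1]
  rw [Finset.sum_congr rfl fun m hm => Finset.sum_congr rfl (step2 m hm)]
  -- reindex to Sc
  have step3 : ∑ m ∈ Finset.Icc 1 (M₁ - 1), ∑ n ∈ Finset.Icc 1 (M₂ - 1),
      (-1 : ℂ) ^ n * (((-1:ℂ)^(m - 1 + (m + n - 2)) * (((m + n - 2).choose (m-1) : ℕ) : ℂ))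
          * ((-1:ℂ)^m * ((M₁.choose (m+1) : ℕ) : ℂ))
          * ((-1:ℂ)^n * ((M₂.choose (n+1) : ℕ) : ℂ)))
      = -((Sc 2 2 M₁ M₂ : ℤ) : ℂ) := by
    unfold Sc
    push_cast
    rw [← Finset.Ico_add_one_right_eq_Icc, Finset.sum_Ico_eq_sum_range]
    rw [Finset.sum_congr rfl fun m _ => by
      rw [← Finset.Ico_add_one_right_eq_Icc, Finset.sum_Ico_eq_sum_range]]
    rw [show M₁ - 1 + 1 - 1 = M₁ - 1 by omega, show M₂ - 1 + 1 - 1 = M₂ - 1 by omega]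
    rw [← Finset.sum_neg_distrib]
    rw [← Finset.sum_subset (Finset.range_subset_range.mpr (show M₁ - 1 ≤ M₁ + 1 by omega))]
    · refine Finset.sum_congr rfl fun a ha => ?_
      rw [Finset.mem_range] at ha
      rw [← Finset.sum_neg_distrib,
          ← Finset.sum_subset (Finset.range_subset_range.mpr (show M₂ - 1 ≤ M₂ + 1 by omega))]
      · refine Finset.sum_congr rfl fun b hb => ?_
        rw [Finset.mem_range] at hb
        rw [show 1 + a - 1 + (1 + a + (1 + b) - 2) = a + (a + b) by omega,
            show 1 + a + (1 + b) - 2 = a + b by omega,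
            show 1 + a - 1 = a by omega,
            show 1 + a + 1 = a + 2 by omega,
            show 1 + b + 1 = b + 2 by omega]
        have h3 : ∀ c : ℕ, (-1:ℂ)^(c*3) = (-1:ℂ)^c := by
          intro c
          rw [pow_mul, show (3:ℕ) = 2+1 from rfl, pow_add, ← pow_mul, mul_comm c 2, pow_mul,
              neg_one_sq, one_pow, pow_one, one_mul]
        ring_nf
        rw [h3 b, h3 a]
      · intro b _ hb
        rw [Finset.mem_range, not_lt] at hb
        rw [Nat.choose_eq_zero_of_lt (show M₂ < b + 2 by omega)]
        push_cast
        ring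
    · intro a _ ha
      rw [Finset.mem_range, not_lt] at ha
      rw [Nat.choose_eq_zero_of_lt (show M₁ < a + 2 by omega)]
      simp
  rw [step3, S22]
  unfold Rf
  push_cast
  ring
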